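/- Let 0 < y < 1 and c > 0 be fixed, and define h(z) = ln((1-y^{zc})/(1-y^{z})) for z > 0. If 0 < c < 1 then h is concave on (0,∞), and if c > 1 then h is convex on (0,∞). -/

import Mathlib

open Real Set

lemma convexOn_sinh_Ici : ConvexOn ℝ (Ici (0:ℝ)) Real.sinh := by
  apply convexOn_of_deriv2_nonneg' (convex_Ici 0)
    Real.differentiable_sinh.differentiableOn
  · rw [Real.deriv_sinh]; exact Real.differentiable_cosh.differentiableOn
  · intro x hx
    simp only [Function.iterate_succ, Function.iterate_zero, Function.comp_apply, Function.id_def,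
      Real.deriv_sinh, Real.deriv_cosh]
    exact Real.sinh_nonneg_iff.2 hx

lemma mul_sinh_le (a b : ℝ) (hb : 0 < b) (hba : b ≤ a) :
    a * Real.sinh b ≤ b * Real.sinh a := by
  have ha : 0 < a := hb.trans_le hba
  have h := convexOn_sinh_Ici.2 (self_mem_Ici) (le_of_lt ha : a ∈ Ici 0)
    (show (0:ℝ) ≤ 1 - b/a by rw [sub_nonneg]; exact div_le_one_of_le₀ hba ha.le)
    (show (0:ℝ) ≤ b/a by positivity) (by ring)
  simp only [smul_eq_mul, mul_zero, zero_add, Real.sinh_zero, mul_zero, zero_add] at h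
  calc a * Real.sinh b = a * Real.sinh (b/a * a) := by rw [div_mul_cancel₀ _ ha.ne']
    _ ≤ a * (b/a * Real.sinh a) := by
        apply mul_le_mul_of_nonneg_left _ ha.le
        simpa using h
    _ = b * Real.sinh a := by field_simp

/-- monotonicity of `G(u) = u^2 e^u / (1-e^u)^2` on negatives -/
lemma G_mono {u v : ℝ} (hv : v < 0) (huv : u ≤ v) :
    u^2 * Real.exp u / (1 - Real.exp u)^2 ≤ v^2 * Real.exp v / (1 - Real.exp v)^2 := by
  set a := -u/2 with ha'
  set b := -v/2 with hb'
  have hb : 0 < b := by simp [hb']; linarith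
  have hba : b ≤ a := by simp [ha', hb']; linarith
  have ha : 0 < a := hb.trans_le hba
  have key : a * Real.sinh b ≤ b * Real.sinh a := mul_sinh_le a b hb hba
  have hGa : u^2 * Real.exp u / (1 - Real.exp u)^2 = a^2 / (Real.sinh a)^2 := by
    have hu : u = -2*a := by rw [ha']; ring
    rw [hu, Real.sinh_eq]
    have h1 : (1 - Real.exp (-2*a))^2 = Real.exp (-2*a) * (Real.exp a - Real.exp (-a))^2 := by
      have : Real.exp (-2*a) = Real.exp (-a) * Real.exp (-a) := by
        rw [← Real.exp_add]; ring_nf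
      rw [this]
      have h2 : Real.exp (-a) * Real.exp a = 1 := by rw [← Real.exp_add]; simp
      have e1 : (1 - Real.exp (-a) * Real.exp (-a)) = Real.exp (-a) * (Real.exp a - Real.exp (-a)) := by
        linear_combination -h2
      rw [e1]; ring
    rw [h1]
    have hsp : Real.exp a - Real.exp (-a) > 0 := by
      have := Real.exp_lt_exp.2 (show -a < a by linarith)
      linarith
    field_simp
  have hGb : v^2 * Real.exp v / (1 - Real.exp v)^2 = b^2 / (Real.sinh b)^2 := by
    have hv2 : v = -2*b := by rw [hb']; ring
    rw [hv2, Real.sinh_eq]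
    have h1 : (1 - Real.exp (-2*b))^2 = Real.exp (-2*b) * (Real.exp b - Real.exp (-b))^2 := by
      have : Real.exp (-2*b) = Real.exp (-b) * Real.exp (-b) := by
        rw [← Real.exp_add]; ring_nf
      rw [this]
      have h2 : Real.exp (-b) * Real.exp b = 1 := by rw [← Real.exp_add]; simp
      have e1 : (1 - Real.exp (-b) * Real.exp (-b)) = Real.exp (-b) * (Real.exp b - Real.exp (-b)) := by
        linear_combination -h2
      rw [e1]; ring
    rw [h1]
    have hsp : Real.exp b - Real.exp (-b) > 0 := by
      have := Real.exp_lt_exp.2 (show -b < b by linarith)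
      linarith
    field_simp
  rw [hGa, hGb]
  have hsa : 0 < Real.sinh a := Real.sinh_pos_iff.2 ha
  have hsb : 0 < Real.sinh b := Real.sinh_pos_iff.2 hb
  rw [div_le_div_iff₀ (by positivity) (by positivity)]
  nlinarith [key, mul_pos ha hsb, mul_pos hb hsa]

private noncomputable def f1Aux (L t : ℝ) : ℝ := -(L * Real.exp (L * t)) / (1 - Real.exp (L * t))
private noncomputable def f2Aux (L t : ℝ) : ℝ := -(L^2 * Real.exp (L * t)) / (1 - Real.exp (L * t))^2

private lemma exp_lt_one_aux {L : ℝ} (hL : L < 0) {t : ℝ} (ht : 0 < t) :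
    Real.exp (L * t) < 1 :=
  Real.exp_lt_one_iff.2 (mul_neg_of_neg_of_pos hL ht)

private lemma hasDerivAt_fAux {L : ℝ} (hL : L < 0) {t : ℝ} (ht : 0 < t) :
    HasDerivAt (fun t => Real.log (1 - Real.exp (L * t))) (f1Aux L t) t := by
  have h1 : (0:ℝ) < 1 - Real.exp (L * t) := by linarith [exp_lt_one_aux hL ht]
  have hE : HasDerivAt (fun x : ℝ => Real.exp (L * x)) (Real.exp (L * t) * (L * 1)) t :=
    ((hasDerivAt_id t).const_mul L).exp
  have h2 := (hE.const_sub 1).log h1.ne'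
  convert h2 using 1
  simp [f1Aux]; ring

private lemma hasDerivAt_f1Aux {L : ℝ} (hL : L < 0) {t : ℝ} (ht : 0 < t) :
    HasDerivAt (f1Aux L) (f2Aux L t) t := by
  have h1 : (0:ℝ) < 1 - Real.exp (L * t) := by linarith [exp_lt_one_aux hL ht]
  have hE : HasDerivAt (fun x : ℝ => Real.exp (L * x)) (Real.exp (L * t) * (L * 1)) t :=
    ((hasDerivAt_id t).const_mul L).exp
  have hn : HasDerivAt (fun x : ℝ => -(L * Real.exp (L * x)))
      (-(L * (Real.exp (L * t) * (L * 1)))) t := (hE.const_mul L).neg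
  have h2 := hn.div (hE.const_sub 1) h1.ne'
  refine h2.congr_deriv ?_
  simp only [f2Aux]
  field_simp
  ring

private lemma hasDerivAt_gAux {L c : ℝ} (hL : L < 0) (hc : 0 < c) {z : ℝ} (hz : 0 < z) :
    HasDerivAt (fun z => Real.log (1 - Real.exp (L * (z * c))) - Real.log (1 - Real.exp (L * z)))
      (c * f1Aux L (z * c) - f1Aux L z) z := by
  have h1 := (hasDerivAt_fAux hL (mul_pos hz hc)).comp z (hasDerivAt_mul_const c)
  have h2 := h1.sub (hasDerivAt_fAux hL hz)
  exact h2.congr_deriv (by ring)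

private lemma hasDerivAt_g1Aux {L c : ℝ} (hL : L < 0) (hc : 0 < c) {z : ℝ} (hz : 0 < z) :
    HasDerivAt (fun z => c * f1Aux L (z * c) - f1Aux L z)
      (c^2 * f2Aux L (z * c) - f2Aux L z) z := by
  have h1 := ((hasDerivAt_f1Aux hL (mul_pos hz hc)).comp z (hasDerivAt_mul_const c)).const_mul c
  have h2 := h1.sub (hasDerivAt_f1Aux hL hz)
  refine h2.congr_deriv ?_
  ring

private lemma sign_key {L c : ℝ} (hL : L < 0) (hc : 0 < c) {z : ℝ} (hz : 0 < z) :
    (1 ≤ c → 0 ≤ c^2 * f2Aux L (z * c) - f2Aux L z) ∧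
    (c ≤ 1 → c^2 * f2Aux L (z * c) - f2Aux L z ≤ 0) := by
  have hv : L * z < 0 := mul_neg_of_neg_of_pos hL hz
  have hu : L * (z * c) < 0 := mul_neg_of_neg_of_pos hL (mul_pos hz hc)
  have key : ∀ u v : ℝ, u < 0 → v < 0 → u ≤ v →
      u^2 * Real.exp u / (1 - Real.exp u)^2 ≤ v^2 * Real.exp v / (1 - Real.exp v)^2 :=
    fun u v _ hv' huv => G_mono hv' huv
  constructor
  · intro hc1
    have huv : L * (z * c) ≤ L * z := by nlinarith
    have hG := key _ _ hu hv huv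
    have e1 : (L * (z * c))^2 * Real.exp (L * (z * c)) / (1 - Real.exp (L * (z * c)))^2
        = z^2 * (c^2 * (L^2 * Real.exp (L * (z * c)) / (1 - Real.exp (L * (z * c)))^2)) := by
      ring
    have e2 : (L * z)^2 * Real.exp (L * z) / (1 - Real.exp (L * z))^2
        = z^2 * (L^2 * Real.exp (L * z) / (1 - Real.exp (L * z))^2) := by ring
    rw [e1, e2] at hG
    have hAB := le_of_mul_le_mul_left hG (by positivity : (0:ℝ) < z^2)
    simp only [f2Aux, neg_div]
    linarith
  · intro hc1
    have huv : L * z ≤ L * (z * c) := by nlinarith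
    have hG := key _ _ hv hu huv
    have e1 : (L * (z * c))^2 * Real.exp (L * (z * c)) / (1 - Real.exp (L * (z * c)))^2
        = z^2 * (c^2 * (L^2 * Real.exp (L * (z * c)) / (1 - Real.exp (L * (z * c)))^2)) := by
      ring
    have e2 : (L * z)^2 * Real.exp (L * z) / (1 - Real.exp (L * z))^2
        = z^2 * (L^2 * Real.exp (L * z) / (1 - Real.exp (L * z))^2) := by ring
    rw [e1, e2] at hG
    have hAB := le_of_mul_le_mul_left hG (by positivity : (0:ℝ) < z^2)
    simp only [f2Aux, neg_div]
    linarith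

/-- Concavity/convexity of `h(z) = log((1-y^{zc})/(1-y^z))` on `(0,∞)` for
`0 < y < 1`, `c > 0`: `h` is concave when `0 < c < 1` and convex when `c > 1`. -/
theorem log_ratio_concave_convex (y c : ℝ) (hy0 : 0 < y) (hy1 : y < 1) (hc : 0 < c) :
    (c < 1 → ConcaveOn ℝ (Set.Ioi 0)
        (fun z : ℝ => Real.log ((1 - y ^ (z * c)) / (1 - y ^ z)))) ∧
    (1 < c → ConvexOn ℝ (Set.Ioi 0)
        (fun z : ℝ => Real.log ((1 - y ^ (z * c)) / (1 - y ^ z)))) := by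
  set L := Real.log y with hLdef
  have hL : L < 0 := Real.log_neg hy0 hy1
  have heq : ∀ z ∈ Set.Ioi (0:ℝ), Real.log ((1 - y ^ (z * c)) / (1 - y ^ z))
      = Real.log (1 - Real.exp (L * (z * c))) - Real.log (1 - Real.exp (L * z)) := by
    intro z hz
    have hz' : (0:ℝ) < z := hz
    have h1 : (0:ℝ) < 1 - Real.exp (L * (z * c)) := by
      linarith [exp_lt_one_aux hL (mul_pos hz' hc)]
    have h2 : (0:ℝ) < 1 - Real.exp (L * z) := by linarith [exp_lt_one_aux hL hz']
    rw [Real.rpow_def_of_pos hy0, Real.rpow_def_of_pos hy0, ← hLdef,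
      Real.log_div h1.ne' h2.ne']
  have hcont : ContinuousOn (fun z : ℝ => Real.log ((1 - y ^ (z * c)) / (1 - y ^ z)))
      (Set.Ioi 0) := by
    have hG : ContinuousOn
        (fun z => Real.log (1 - Real.exp (L * (z * c))) - Real.log (1 - Real.exp (L * z)))
        (Set.Ioi 0) :=
      fun z hz => (hasDerivAt_gAux hL hc hz).continuousAt.continuousWithinAt
    exact hG.congr heq
  have hf' : ∀ x ∈ interior (Set.Ioi (0:ℝ)),
      HasDerivWithinAt (fun z : ℝ => Real.log ((1 - y ^ (z * c)) / (1 - y ^ z)))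
        (c * f1Aux L (x * c) - f1Aux L x) (interior (Set.Ioi (0:ℝ))) x := by
    rw [interior_Ioi]
    intro x hx
    exact ((hasDerivAt_gAux hL hc hx).hasDerivWithinAt).congr
      (fun w hw => heq w hw) (heq x hx)
  have hf'' : ∀ x ∈ interior (Set.Ioi (0:ℝ)),
      HasDerivWithinAt (fun z : ℝ => c * f1Aux L (z * c) - f1Aux L z)
        (c^2 * f2Aux L (x * c) - f2Aux L x) (interior (Set.Ioi (0:ℝ))) x := by
    rw [interior_Ioi]
    intro x hx
    exact (hasDerivAt_g1Aux hL hc hx).hasDerivWithinAt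
  constructor
  · intro hc1
    refine concaveOn_of_hasDerivWithinAt2_nonpos (convex_Ioi 0) hcont hf' hf'' ?_
    rw [interior_Ioi]
    intro x hx
    exact (sign_key hL hc hx).2 hc1.le
  · intro hc1
    refine convexOn_of_hasDerivWithinAt2_nonneg (convex_Ioi 0) hcont hf' hf'' ?_
    rw [interior_Ioi]
    intro x hx
    exact (sign_key hL hc hx).1 hc1.le
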